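/- (Telescoping advantage identity) For any two policies π and π̃ in a finite discounted MDP, E_{τ∼π̃}[∑_{t≥0} γ^t A^π(s_t, a_t)] = V^{π̃}(s_0) − V^π(s_0) for any fixed initial state s_0, where the expectation is over trajectories generated by π̃. -/

import Mathlib

open Finset Filter Topology

variable {S A : Type*}

section Defs
variable [Fintype S] [Fintype A] [DecidableEq S] [DecidableEq A]

/-- Distribution of the state-action pair `(s_k, a_k)` for trajectories started in state `s0`
(with all actions, including the first, sampled from the policy `π`). -/
noncomputable def saDistS (π : S → A → ℝ) (P : S → A → S → ℝ) (s0 : S) : ℕ → S × A → ℝ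
  | 0 => fun sa => (if sa.1 = s0 then 1 else 0) * π sa.1 sa.2
  | k + 1 => fun sa => (∑ p : S × A, saDistS π P s0 k p * P p.1 p.2 sa.1) * π sa.1 sa.2

/-- Distribution of `(s_k, a_k)` for trajectories started with `s_0 = s0`, `a_0 = a0`. -/
noncomputable def saDistSA (π : S → A → ℝ) (P : S → A → S → ℝ) (s0 : S) (a0 : A) :
    ℕ → S × A → ℝ
  | 0 => fun sa => if sa = (s0, a0) then 1 else 0
  | k + 1 => fun sa => (∑ p : S × A, saDistSA π P s0 a0 k p * P p.1 p.2 sa.1) * π sa.1 sa.2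

/-- Distribution of `(s_k, a_k)` for trajectories with initial state distribution `μ0`. -/
noncomputable def saDistI (π : S → A → ℝ) (P : S → A → S → ℝ) (μ0 : S → ℝ) : ℕ → S × A → ℝ
  | 0 => fun sa => μ0 sa.1 * π sa.1 sa.2
  | k + 1 => fun sa => (∑ p : S × A, saDistI π P μ0 k p * P p.1 p.2 sa.1) * π sa.1 sa.2

/-- The value function `V^π(s)`: expected discounted return starting from `s`. -/
noncomputable def Vpi (π : S → A → ℝ) (P : S → A → S → ℝ) (r : S → A → ℝ) (γ : ℝ) (s : S) :
    ℝ :=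
  ∑' k : ℕ, γ ^ k * ∑ sa : S × A, saDistS π P s k sa * r sa.1 sa.2

/-- The action-value function `Q^π(s, a)`: expected discounted return starting from `(s, a)`. -/
noncomputable def Qpi (π : S → A → ℝ) (P : S → A → S → ℝ) (r : S → A → ℝ) (γ : ℝ) (s : S)
    (a : A) : ℝ :=
  ∑' k : ℕ, γ ^ k * ∑ sa : S × A, saDistSA π P s a k sa * r sa.1 sa.2

/-- The advantage function `A^π = Q^π - V^π`. -/
noncomputable def Api (π : S → A → ℝ) (P : S → A → S → ℝ) (r : S → A → ℝ) (γ : ℝ) (s : S)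
    (a : A) : ℝ :=
  Qpi π P r γ s a - Vpi π P r γ s

/-- `π` is a policy: a probability distribution over actions at each state. -/
def IsPolicy (π : S → A → ℝ) : Prop := (∀ s a, 0 ≤ π s a) ∧ ∀ s, ∑ a : A, π s a = 1

/-- `P` is a transition kernel. -/
def IsKernel (P : S → A → S → ℝ) : Prop :=
  (∀ s a s', 0 ≤ P s a s') ∧ ∀ s a, ∑ s' : S, P s a s' = 1

/-- `μ0` is a probability distribution over states. -/
def IsDist (μ0 : S → ℝ) : Prop := (∀ s, 0 ≤ μ0 s) ∧ ∑ s : S, μ0 s = 1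

/-- `f` is `π`-centered: `∑_a π(a|s) f(s,a) = 0` at every state. -/
def IsCentered (π : S → A → ℝ) (f : S → A → ℝ) : Prop := ∀ s, ∑ a : A, π s a * f s a = 0

/-- Probability of the trajectory prefix `(s_0, a_0, …, s_n, a_n)` under policy `π`,
kernel `P` and initial state distribution `μ0`. -/
noncomputable def pathProb (π : S → A → ℝ) (P : S → A → S → ℝ) (μ0 : S → ℝ) (n : ℕ)
    (τ : Fin (n + 1) → S × A) : ℝ :=
  μ0 (τ 0).1 * (∏ k : Fin (n + 1), π (τ k).1 (τ k).2) *
    ∏ k : Fin n, P (τ k.castSucc).1 (τ k.castSucc).2 (τ k.succ).1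

/-- Expectation, over trajectory prefixes of length `n + 1`, of a function `f` of the prefix. -/
noncomputable def pathExp (π : S → A → ℝ) (P : S → A → S → ℝ) (μ0 : S → ℝ) (n : ℕ)
    (f : (Fin (n + 1) → S × A) → ℝ) : ℝ :=
  ∑ τ : Fin (n + 1) → S × A, pathProb π P μ0 n τ * f τ

/-- `n`-step bootstrapped action-value: `E[∑_{k<m} γ^k r_k + γ^m Vtgt(s_m) | s_0 = s, a_0 = a]`. -/
noncomputable def nstepQ (π : S → A → ℝ) (P : S → A → S → ℝ) (r : S → A → ℝ) (γ : ℝ)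
    (Vtgt : S → ℝ) (m : ℕ) (s : S) (a : A) : ℝ :=
  (∑ k ∈ Finset.range m, γ ^ k * ∑ sa : S × A, saDistSA π P s a k sa * r sa.1 sa.2)
    + γ ^ m * ∑ sa : S × A, saDistSA π P s a m sa * Vtgt sa.1

/-- `n`-step bootstrapped value: `E[∑_{k<m} γ^k r_k + γ^m Vtgt(s_m) | s_0 = s]`. -/
noncomputable def nstepV (π : S → A → ℝ) (P : S → A → S → ℝ) (r : S → A → ℝ) (γ : ℝ)
    (Vtgt : S → ℝ) (m : ℕ) (s : S) : ℝ :=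
  ∑ a : A, π s a * nstepQ π P r γ Vtgt m s a

/-- `π`-centering projection. -/
noncomputable def centerProj (π : S → A → ℝ) (f : S → A → ℝ) (s : S) (a : A) : ℝ :=
  f s a - ∑ a' : A, π s a' * f s a'

end Defs

set_option linter.unusedSectionVars false

section AuxPDL
variable [Fintype S] [Fintype A] [DecidableEq S] [DecidableEq A]
variable {π : S → A → ℝ} {P : S → A → S → ℝ}

lemma saDistS_nonneg (hπ : IsPolicy π) (hP : IsKernel P) (s0 : S) (k : ℕ) (sa : S × A) :
    0 ≤ saDistS π P s0 k sa := by
  induction k generalizing sa with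
  | zero =>
    simp only [saDistS]
    apply mul_nonneg _ (hπ.1 _ _)
    split_ifs <;> norm_num
  | succ k ih =>
    exact mul_nonneg (Finset.sum_nonneg fun p _ => mul_nonneg (ih p) (hP.1 _ _ _)) (hπ.1 _ _)

lemma saDistS_sum_one (hπ : IsPolicy π) (hP : IsKernel P) (s0 : S) (k : ℕ) :
    ∑ sa : S × A, saDistS π P s0 k sa = 1 := by
  induction k with
  | zero =>
    simp only [saDistS, Fintype.sum_prod_type, ← Finset.mul_sum, hπ.2]
    simp only [ite_mul, one_mul, zero_mul]
    have h : ∀ x : S, (∑ a : A, if x = s0 then π x a else 0) = if x = s0 then 1 else 0 := by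
      intro x; split_ifs with hx
      · exact hπ.2 x
      · simp
    simp only [h, Finset.sum_ite_eq', Finset.mem_univ, if_true]
  | succ k ih =>
    calc ∑ sa : S × A, saDistS π P s0 (k + 1) sa
        = ∑ s' : S, ∑ a : A, (∑ p : S × A, saDistS π P s0 k p * P p.1 p.2 s') * π s' a := by
          rw [Fintype.sum_prod_type]; rfl
      _ = ∑ s' : S, ∑ p : S × A, saDistS π P s0 k p * P p.1 p.2 s' := by
          simp [← Finset.mul_sum, hπ.2]
      _ = ∑ p : S × A, ∑ s' : S, saDistS π P s0 k p * P p.1 p.2 s' := Finset.sum_comm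
      _ = ∑ p : S × A, saDistS π P s0 k p := by simp [← Finset.mul_sum, hP.2]
      _ = 1 := ih

lemma saDistSA_nonneg (hπ : IsPolicy π) (hP : IsKernel P) (s0 : S) (a0 : A) (k : ℕ)
    (sa : S × A) : 0 ≤ saDistSA π P s0 a0 k sa := by
  induction k generalizing sa with
  | zero =>
    simp only [saDistSA]
    split_ifs <;> norm_num
  | succ k ih =>
    exact mul_nonneg (Finset.sum_nonneg fun p _ => mul_nonneg (ih p) (hP.1 _ _ _)) (hπ.1 _ _)

lemma saDistSA_sum_one (hπ : IsPolicy π) (hP : IsKernel P) (s0 : S) (a0 : A) (k : ℕ) :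
    ∑ sa : S × A, saDistSA π P s0 a0 k sa = 1 := by
  induction k with
  | zero => simp [saDistSA]
  | succ k ih =>
    calc ∑ sa : S × A, saDistSA π P s0 a0 (k + 1) sa
        = ∑ s' : S, ∑ a : A, (∑ p : S × A, saDistSA π P s0 a0 k p * P p.1 p.2 s') * π s' a := by
          rw [Fintype.sum_prod_type]; rfl
      _ = ∑ s' : S, ∑ p : S × A, saDistSA π P s0 a0 k p * P p.1 p.2 s' := by
          simp [← Finset.mul_sum, hπ.2]
      _ = ∑ p : S × A, ∑ s' : S, saDistSA π P s0 a0 k p * P p.1 p.2 s' := Finset.sum_comm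
      _ = ∑ p : S × A, saDistSA π P s0 a0 k p := by simp [← Finset.mul_sum, hP.2]
      _ = 1 := ih

lemma saDistSA_succ_eq (s : S) (a : A) (k : ℕ) :
    saDistSA π P s a (k + 1) = fun sa => ∑ s' : S, P s a s' * saDistS π P s' k sa := by
  induction k with
  | zero =>
    funext sa
    simp only [saDistSA, saDistS, ite_mul, one_mul, zero_mul, mul_ite, mul_one, mul_zero,
      Finset.sum_ite_eq', Finset.sum_ite_eq, Finset.mem_univ, if_true]
  | succ k ih =>
    funext sa
    rw [saDistSA, ih]
    simp only [saDistS]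
    simp only [Finset.sum_mul, Finset.mul_sum]
    rw [Finset.sum_comm]
    exact Finset.sum_congr rfl fun s' _ => Finset.sum_congr rfl fun p _ => by ring

/-- Expectation bound under a probability distribution. -/
lemma abs_expect_le {d f : S × A → ℝ} (hd0 : ∀ sa, 0 ≤ d sa) (hd1 : ∑ sa : S × A, d sa = 1)
    {C : ℝ} (hC : ∀ sa, |f sa| ≤ C) : |∑ sa : S × A, d sa * f sa| ≤ C := by
  calc |∑ sa : S × A, d sa * f sa| ≤ ∑ sa : S × A, |d sa * f sa| :=
        Finset.abs_sum_le_sum_abs _ _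
    _ ≤ ∑ sa : S × A, d sa * C := by
        refine Finset.sum_le_sum fun sa _ => ?_
        rw [abs_mul, abs_of_nonneg (hd0 sa)]
        exact mul_le_mul_of_nonneg_left (hC sa) (hd0 sa)
    _ = C := by rw [← Finset.sum_mul, hd1, one_mul]

lemma summable_geom_bounded {c : ℕ → ℝ} {M γ : ℝ} (hγ0 : 0 ≤ γ) (hγ1 : γ < 1)
    (hM : ∀ n, |c n| ≤ M) : Summable fun n => γ ^ n * c n := by
  refine Summable.of_norm_bounded
    ((summable_geometric_of_lt_one hγ0 hγ1).mul_left M) fun n => ?_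
  rw [Real.norm_eq_abs, abs_mul, abs_pow, abs_of_nonneg hγ0, mul_comm]
  exact mul_le_mul_of_nonneg_right (hM n) (pow_nonneg hγ0 n)

end AuxPDL
section Bellman
variable [Fintype S] [Fintype A] [DecidableEq S] [DecidableEq A]
variable {π : S → A → ℝ} {P : S → A → S → ℝ}

lemma Qpi_bellman (hπ : IsPolicy π) (hP : IsKernel P) {r : S → A → ℝ} {γ : ℝ}
    (hγ0 : 0 ≤ γ) (hγ1 : γ < 1) (s : S) (a : A) :
    Qpi π P r γ s a = r s a + γ * ∑ s' : S, P s a s' * Vpi π P r γ s' := by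
  set C : ℝ := ∑ sa : S × A, |r sa.1 sa.2| with hC
  have hrC : ∀ sa : S × A, |r sa.1 sa.2| ≤ C := fun sa =>
    Finset.single_le_sum (f := fun p : S × A => |r p.1 p.2|) (fun p _ => abs_nonneg _)
      (Finset.mem_univ sa)
  have hsumQ : Summable fun k => γ ^ k * ∑ sa : S × A, saDistSA π P s a k sa * r sa.1 sa.2 :=
    summable_geom_bounded hγ0 hγ1 fun k =>
      abs_expect_le (saDistSA_nonneg hπ hP s a k) (saDistSA_sum_one hπ hP s a k) hrC
  have hsumV : ∀ s : S,
      Summable fun k => γ ^ k * ∑ sa : S × A, saDistS π P s k sa * r sa.1 sa.2 :=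
    fun s => summable_geom_bounded hγ0 hγ1 fun k =>
      abs_expect_le (saDistS_nonneg hπ hP s k) (saDistS_sum_one hπ hP s k) hrC
  rw [Qpi, Summable.tsum_eq_zero_add hsumQ]
  congr 1
  · simp [saDistSA]
  · have key : ∀ k : ℕ, γ ^ (k + 1) * ∑ sa : S × A, saDistSA π P s a (k + 1) sa * r sa.1 sa.2
        = ∑ s' : S, P s a s' *
            (γ * (γ ^ k * ∑ sa : S × A, saDistS π P s' k sa * r sa.1 sa.2)) := by
      intro k
      rw [saDistSA_succ_eq]
      simp only [Finset.sum_mul, Finset.mul_sum]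
      rw [Finset.sum_comm]
      exact Finset.sum_congr rfl fun s' _ => Finset.sum_congr rfl fun sa _ => by ring
    calc ∑' k, γ ^ (k + 1) * ∑ sa : S × A, saDistSA π P s a (k + 1) sa * r sa.1 sa.2
        = ∑' k, ∑ s' : S, P s a s' *
            (γ * (γ ^ k * ∑ sa : S × A, saDistS π P s' k sa * r sa.1 sa.2)) := tsum_congr key
      _ = ∑ s' : S, ∑' k, P s a s' *
            (γ * (γ ^ k * ∑ sa : S × A, saDistS π P s' k sa * r sa.1 sa.2)) :=
          Summable.tsum_finsetSum fun s' _ => (((hsumV s').mul_left γ).mul_left (P s a s'))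
      _ = γ * ∑ s' : S, P s a s' * Vpi π P r γ s' := by
          simp only [tsum_mul_left]
          rw [Finset.mul_sum]
          exact Finset.sum_congr rfl fun s' _ => by rw [Vpi]; ring

end Bellman
set_option maxHeartbeats 1000000

/-- Performance difference / telescoping advantage identity: for any two
policies `π` and `π̃`, `E_{τ∼π̃}[∑_t γ^t A^π(s_t,a_t)] = V^{π̃}(s_0) - V^π(s_0)` for any
fixed initial state `s_0`. -/
theorem performance_difference
    [Fintype S] [Fintype A] [DecidableEq S] [DecidableEq A]
    (π πt : S → A → ℝ) (P : S → A → S → ℝ) (r : S → A → ℝ) (γ : ℝ)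
    (hπ : IsPolicy π) (hπt : IsPolicy πt) (hP : IsKernel P) (hγ0 : 0 ≤ γ) (hγ1 : γ < 1)
    (s0 : S) :
    ∑' t : ℕ, γ ^ t * ∑ sa : S × A, saDistS πt P s0 t sa * Api π P r γ sa.1 sa.2
      = Vpi πt P r γ s0 - Vpi π P r γ s0 := by
  set d : ℕ → S × A → ℝ := saDistS πt P s0 with hd
  set V : S → ℝ := Vpi π P r γ with hV
  have hVC : ∀ sa : S × A, |V sa.1| ≤ ∑ s : S, |V s| := fun sa =>
    Finset.single_le_sum (f := fun s => |V s|) (fun _ _ => abs_nonneg _) (Finset.mem_univ sa.1)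
  have hrC : ∀ sa : S × A, |r sa.1 sa.2| ≤ ∑ p : S × A, |r p.1 p.2| := fun sa =>
    Finset.single_le_sum (f := fun p : S × A => |r p.1 p.2|) (fun _ _ => abs_nonneg _)
      (Finset.mem_univ sa)
  have hd0 : ∀ t sa, 0 ≤ d t sa := fun t => saDistS_nonneg hπt hP s0 t
  have hd1 : ∀ t, ∑ sa : S × A, d t sa = 1 := saDistS_sum_one hπt hP s0
  set R : ℕ → ℝ := fun t => ∑ sa : S × A, d t sa * r sa.1 sa.2 with hR
  set D : ℕ → ℝ := fun t => ∑ sa : S × A, d t sa * V sa.1 with hD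
  have hsumR : Summable fun t => γ ^ t * R t :=
    summable_geom_bounded hγ0 hγ1 fun t => abs_expect_le (hd0 t) (hd1 t) hrC
  have hsumD : Summable fun t => γ ^ t * D t :=
    summable_geom_bounded hγ0 hγ1 fun t => abs_expect_le (hd0 t) (hd1 t) hVC
  have hsumD' : Summable fun t => γ ^ (t + 1) * D (t + 1) := (summable_nat_add_iff 1).2 hsumD
  have hDsucc : ∀ t, D (t + 1) = ∑ sa : S × A, d t sa * ∑ s' : S, P sa.1 sa.2 s' * V s' := by
    intro t
    calc D (t + 1)
        = ∑ s' : S, ∑ a' : A, (∑ p : S × A, d t p * P p.1 p.2 s') * πt s' a' * V s' := by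
          show ∑ sa : S × A, saDistS πt P s0 (t + 1) sa * V sa.1 = _
          rw [Fintype.sum_prod_type]; rfl
      _ = ∑ s' : S, (∑ p : S × A, d t p * P p.1 p.2 s') * V s' := by
          refine Finset.sum_congr rfl fun s' _ => ?_
          trans ∑ a' : A, ((∑ p : S × A, d t p * P p.1 p.2 s') * V s') * πt s' a'
          · exact Finset.sum_congr rfl fun a' _ => by ring
          · rw [← Finset.mul_sum, hπt.2, mul_one]
      _ = ∑ sa : S × A, d t sa * ∑ s' : S, P sa.1 sa.2 s' * V s' := by
          simp only [Finset.sum_mul, Finset.mul_sum]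
          rw [Finset.sum_comm]
          exact Finset.sum_congr rfl fun p _ => Finset.sum_congr rfl fun s' _ => by ring
  have hterm : ∀ t, γ ^ t * ∑ sa : S × A, d t sa * Api π P r γ sa.1 sa.2
      = γ ^ t * R t + (γ ^ (t + 1) * D (t + 1) - γ ^ t * D t) := by
    intro t
    have hApi : ∀ sa : S × A, Api π P r γ sa.1 sa.2
        = r sa.1 sa.2 + γ * (∑ s' : S, P sa.1 sa.2 s' * V s') - V sa.1 := by
      intro sa
      rw [Api, Qpi_bellman hπ hP hγ0 hγ1, hV]
    have expand : ∑ sa : S × A, d t sa * Api π P r γ sa.1 sa.2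
        = R t + γ * (∑ sa : S × A, d t sa * ∑ s' : S, P sa.1 sa.2 s' * V s') - D t := by
      calc ∑ sa : S × A, d t sa * Api π P r γ sa.1 sa.2
          = ∑ sa : S × A, (d t sa * r sa.1 sa.2
              + γ * (d t sa * ∑ s' : S, P sa.1 sa.2 s' * V s') - d t sa * V sa.1) :=
            Finset.sum_congr rfl fun sa _ => by rw [hApi sa]; ring
        _ = R t + γ * (∑ sa : S × A, d t sa * ∑ s' : S, P sa.1 sa.2 s' * V s') - D t := by
            rw [Finset.sum_sub_distrib, Finset.sum_add_distrib, ← Finset.mul_sum]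
    rw [expand, ← hDsucc]
    ring
  calc ∑' t : ℕ, γ ^ t * ∑ sa : S × A, d t sa * Api π P r γ sa.1 sa.2
      = ∑' t : ℕ, (γ ^ t * R t + (γ ^ (t + 1) * D (t + 1) - γ ^ t * D t)) := tsum_congr hterm
    _ = (∑' t : ℕ, γ ^ t * R t)
          + ((∑' t : ℕ, γ ^ (t + 1) * D (t + 1)) - ∑' t : ℕ, γ ^ t * D t) := by
        rw [Summable.tsum_add hsumR (hsumD'.sub hsumD), Summable.tsum_sub hsumD' hsumD]
    _ = Vpi πt P r γ s0 - Vpi π P r γ s0 := by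
        have h1 : ∑' t : ℕ, γ ^ t * R t = Vpi πt P r γ s0 := by simp only [hR, hd, Vpi]
        have h2 : (∑' t : ℕ, γ ^ t * D t)
            = γ ^ 0 * D 0 + ∑' t : ℕ, γ ^ (t + 1) * D (t + 1) := Summable.tsum_eq_zero_add hsumD
        have h3 : γ ^ 0 * D 0 = Vpi π P r γ s0 := by
          rw [pow_zero, one_mul, ← hV]
          show ∑ sa : S × A, saDistS πt P s0 0 sa * V sa.1 = V s0
          rw [Fintype.sum_prod_type]
          calc ∑ s : S, ∑ a : A, (if s = s0 then 1 else 0) * πt s a * V s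
              = ∑ s : S, (if s = s0 then 1 else 0) * V s := by
                refine Finset.sum_congr rfl fun s _ => ?_
                trans ∑ a : A, ((if s = s0 then 1 else 0) * V s) * πt s a
                · exact Finset.sum_congr rfl fun a _ => by ring
                · rw [← Finset.mul_sum, hπt.2, mul_one]
            _ = V s0 := by simp
        rw [h1, h2, h3]
        ring
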